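/- Let 2l < a < 2l+1 with l ∈ ℕ. Then μ = π/2 is a solution of μ·tan(μa) = (π/2)·tan(πa/2), and it is the (l+1)-st smallest positive solution of this equation; equivalently, exactly l positive solutions are strictly smaller than π/2. -/

import Mathlib

open Real Set Filter Topology

lemma aux_pos {x : ℝ} (hx : 0 < x) : 0 < x + Real.sin x * Real.cos x := by
  rcases le_or_gt x (1/2) with h | h
  · have hs : 0 < Real.sin x :=
      Real.sin_pos_of_pos_of_lt_pi hx (by nlinarith [Real.pi_gt_three])
    have hc : 0 < Real.cos x := Real.cos_pos_of_mem_Ioo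
      ⟨by nlinarith [Real.pi_gt_three], by nlinarith [Real.pi_gt_three]⟩
    nlinarith
  · have h1 : Real.sin x * Real.cos x = Real.sin (2*x) / 2 := by
      rw [Real.sin_two_mul]; ring
    have h2 := Real.neg_one_le_sin (2*x)
    nlinarith

lemma cos_ne_branch {x : ℝ} {k : ℤ} (h1 : (2*(k:ℝ)-1)*(π/2) < x)
    (h2 : x < (2*(k:ℝ)+1)*(π/2)) : Real.cos x ≠ 0 := by
  intro h
  obtain ⟨n, hn⟩ := Real.cos_eq_zero_iff.1 h
  have hπ := Real.pi_pos
  rw [hn] at h1 h2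
  have e1 : (2*(k:ℝ)-1) < 2*(n:ℝ)+1 := by nlinarith
  have e2 : (2*(n:ℝ)+1) < 2*(k:ℝ)+1 := by nlinarith
  have f1 : (2*k-1 : ℤ) < 2*n+1 := by exact_mod_cast e1
  have f2 : (2*n+1 : ℤ) < 2*k+1 := by exact_mod_cast e2
  omega

lemma tendsto_Iio_map {f : ℝ → ℝ} {c d : ℝ} (hf : Tendsto f (𝓝 c) (𝓝 d))
    (hmap : ∀ x < c, f x < d) : Tendsto f (𝓝[<] c) (𝓝[<] d) := by
  apply tendsto_nhdsWithin_of_tendsto_nhds_of_eventually_within _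
    (hf.mono_left nhdsWithin_le_nhds)
  filter_upwards [self_mem_nhdsWithin] with x hx using hmap x hx

lemma tendsto_Ioi_map {f : ℝ → ℝ} {c d : ℝ} (hf : Tendsto f (𝓝 c) (𝓝 d))
    (hmap : ∀ x, c < x → d < f x) : Tendsto f (𝓝[>] c) (𝓝[>] d) := by
  apply tendsto_nhdsWithin_of_tendsto_nhds_of_eventually_within _
    (hf.mono_left nhdsWithin_le_nhds)
  filter_upwards [self_mem_nhdsWithin] with x hx using hmap x hx

lemma tan_top (k : ℤ) : Tendsto Real.tan (𝓝[<] ((2*(k:ℝ)+1)*(π/2))) atTop := by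
  have h1 : Tendsto (fun x : ℝ => x - k*π) (𝓝[<] ((2*(k:ℝ)+1)*(π/2))) (𝓝[<] (π/2)) := by
    apply tendsto_Iio_map
    · have h : ((2*(k:ℝ)+1)*(π/2)) - k*π = π/2 := by ring
      have ht := (continuous_sub_right ((k:ℝ)*π)).tendsto ((2*(k:ℝ)+1)*(π/2))
      rwa [h] at ht
    · intro x hx; linarith
  have h2 := Real.tendsto_tan_pi_div_two.comp h1
  refine h2.congr fun x => ?_
  exact Real.tan_periodic.sub_int_mul_eq k

lemma tan_bot (k : ℤ) : Tendsto Real.tan (𝓝[>] ((2*(k:ℝ)-1)*(π/2))) atBot := by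
  have h1 : Tendsto (fun x : ℝ => x - k*π) (𝓝[>] ((2*(k:ℝ)-1)*(π/2))) (𝓝[>] (-(π/2))) := by
    apply tendsto_Ioi_map
    · have h : ((2*(k:ℝ)-1)*(π/2)) - k*π = -(π/2) := by ring
      have ht := (continuous_sub_right ((k:ℝ)*π)).tendsto ((2*(k:ℝ)-1)*(π/2))
      rwa [h] at ht
    · intro x hx; linarith
  have h2 := Real.tendsto_tan_neg_pi_div_two.comp h1
  refine h2.congr fun x => ?_
  exact Real.tan_periodic.sub_int_mul_eq k

lemma gmono {a c d : ℝ} (ha : 0 < a) (hc : 0 ≤ c)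
    (hcos : ∀ μ ∈ Ioo c d, Real.cos (μ * a) ≠ 0) :
    StrictMonoOn (fun μ => μ * Real.tan (μ * a)) (Ioo c d) := by
  have hderiv : ∀ μ ∈ Ioo c d, HasDerivAt (fun μ => μ * Real.tan (μ * a))
      (Real.tan (μ * a) + μ * (1 / Real.cos (μ * a) ^ 2 * a)) μ := by
    intro μ hμ
    have h1 : HasDerivAt (fun μ : ℝ => μ * a) a μ := by
      simpa using (hasDerivAt_id μ).mul_const a
    have h2 : HasDerivAt (fun μ => Real.tan (μ * a)) (1 / Real.cos (μ*a)^2 * a) μ :=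
      by have := (Real.hasDerivAt_tan (hcos μ hμ)).comp μ h1; exact this
    have h3 : HasDerivAt (fun y => y * Real.tan (y * a)) (1 * Real.tan (μ * a) + μ * (1 / Real.cos (μ*a)^2 * a)) μ := (hasDerivAt_id μ).mul h2
    convert h3 using 1
    simp only [id_eq, one_mul]
  apply strictMonoOn_of_deriv_pos (convex_Ioo c d)
  · intro μ hμ; exact (hderiv μ hμ).continuousAt.continuousWithinAt
  · intro μ hμ
    rw [interior_Ioo] at hμ
    rw [(hderiv μ hμ).deriv]
    have hμ0 : 0 < μ := lt_of_le_of_lt hc hμ.1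
    have hco := hcos μ hμ
    have hx := aux_pos (x := μ * a) (by positivity)
    have hcsq : 0 < Real.cos (μ*a)^2 := by positivity
    have he : Real.tan (μ*a) + μ * (1 / Real.cos (μ*a)^2 * a)
        = (Real.sin (μ*a) * Real.cos (μ*a) + μ*a) / Real.cos (μ*a)^2 := by
      rw [Real.tan_eq_sin_div_cos]; field_simp
    rw [he]
    exact div_pos (by linarith) hcsq
set_option maxHeartbeats 1000000 in
theorem stmt12 (l : ℕ) (a : ℝ) (ha : 2 * (l:ℝ) < a) (ha' : a < 2 * (l:ℝ) + 1) :
    (π / 2) * Real.tan ((π / 2) * a) = (π / 2) * Real.tan (π * a / 2)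
    ∧ {μ : ℝ | 0 < μ ∧ μ < π / 2 ∧
        μ * Real.tan (μ * a) = (π / 2) * Real.tan (π * a / 2)}.ncard = l := by
  have hπ : (0:ℝ) < π := Real.pi_pos
  have hl0 : (0:ℝ) ≤ 2*(l:ℝ) := by positivity
  have ha0 : 0 < a := lt_of_le_of_lt hl0 ha
  have hfst : (π / 2) * Real.tan ((π / 2) * a) = (π / 2) * Real.tan (π * a / 2) := by
    rw [show (π/2) * a = π * a / 2 by ring]
  refine ⟨hfst, ?_⟩
  set C : ℝ := (π/2) * Real.tan (π * a / 2) with hCdef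
  have htpos : 0 < Real.tan (π * a / 2) := by
    have h1 : Real.tan (π * a / 2) = Real.tan (π * a / 2 - l * π) :=
      (Real.tan_periodic.sub_nat_mul_eq l).symm
    rw [h1]
    apply Real.tan_pos_of_pos_of_lt_pi_div_two
    · nlinarith
    · nlinarith
  have hCpos : 0 < C := by rw [hCdef]; exact mul_pos (by positivity) htpos
  set lo : ℕ → ℝ := fun k => ((2*(k:ℝ)-1)*(π/2))/a with hlo
  set hi : ℕ → ℝ := fun k => ((2*(k:ℝ)+1)*(π/2))/a with hhi
  set I : ℕ → Set ℝ := fun k => Ioo (max (lo k) 0) (hi k) with hI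
  have hhi_pos : ∀ k : ℕ, 0 < hi k := by
    intro k; simp only [hhi]
    apply div_pos _ ha0
    positivity
  have hlo_lt_hi : ∀ k : ℕ, lo k < hi k := by
    intro k; simp only [hlo, hhi]
    rw [div_lt_div_iff₀ ha0 ha0]
    nlinarith
  have hmem : ∀ k : ℕ, ∀ μ ∈ I k,
      (2*(k:ℝ)-1)*(π/2) < μ*a ∧ μ*a < (2*(k:ℝ)+1)*(π/2) := by
    intro k μ hμ
    simp only [hI, mem_Ioo] at hμ
    obtain ⟨h1, h2⟩ := hμ
    have h3 : lo k < μ := lt_of_le_of_lt (le_max_left _ _) h1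
    constructor
    · simp only [hlo] at h3; rwa [div_lt_iff₀ ha0] at h3
    · simp only [hhi] at h2; rwa [lt_div_iff₀ ha0] at h2
  have hcosI : ∀ k : ℕ, ∀ μ ∈ I k, Real.cos (μ*a) ≠ 0 := by
    intro k μ hμ
    obtain ⟨h1, h2⟩ := hmem k μ hμ
    exact cos_ne_branch (k := (k:ℤ)) (by push_cast; linarith) (by push_cast; linarith)
  have hmono : ∀ k : ℕ, StrictMonoOn (fun μ => μ * Real.tan (μ*a)) (I k) := by
    intro k
    simp only [hI]
    exact gmono ha0 (le_max_right _ _) (fun μ hμ => hcosI k μ hμ)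
  have hcont : ∀ k : ℕ, ContinuousOn (fun μ => μ * Real.tan (μ*a)) (I k) := by
    intro k μ hμ
    have hc := hcosI k μ hμ
    have h2 : ContinuousAt (fun x : ℝ => x * a) μ := continuousAt_id.mul continuousAt_const
    have h3 : ContinuousAt (fun x : ℝ => Real.tan (x * a)) μ :=
      ContinuousAt.comp (f := fun x : ℝ => x * a) (Real.continuousAt_tan.2 hc) h2
    exact (continuousAt_id.mul h3).continuousWithinAt
  have hex : ∀ k : ℕ, ∃ μ ∈ I k, μ * Real.tan (μ*a) = C := by
    intro k
    have hhia : hi k * a = (2*(k:ℝ)+1)*(π/2) := by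
      simp only [hhi]; field_simp
    have hloa : lo k * a = (2*(k:ℝ)-1)*(π/2) := by
      simp only [hlo]; field_simp
    -- point v with C < g v
    have hiv : Tendsto (fun μ => μ*a) (𝓝[<] (hi k)) (𝓝[<] ((2*(k:ℝ)+1)*(π/2))) := by
      apply tendsto_Iio_map
      · have ht := (continuous_mul_right a).tendsto (hi k)
        rwa [hhia] at ht
      · intro x hx
        rw [← hhia]
        exact mul_lt_mul_of_pos_right hx ha0
    have htt : Tendsto Real.tan (𝓝[<] ((2*(k:ℝ)+1)*(π/2))) atTop := by
      have := tan_top (k:ℤ); push_cast at this; exact this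
    have hgt : Tendsto (fun μ => μ * Real.tan (μ*a)) (𝓝[<] (hi k)) atTop :=
      Tendsto.pos_mul_atTop (hhi_pos k) (tendsto_id.mono_right nhdsWithin_le_nhds)
        (htt.comp hiv)
    have hIk_mem : I k ∈ 𝓝[<] (hi k) := by
      simp only [hI]
      exact Ioo_mem_nhdsLT_of_mem ⟨max_lt (hlo_lt_hi k) (hhi_pos k), le_refl _⟩
    obtain ⟨v, hv1, hv2⟩ :=
      ((hgt.eventually (eventually_gt_atTop C)).and
        (eventually_of_mem hIk_mem (fun x hx => hx))).exists
    -- point u with g u < C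
    have hu : ∃ u ∈ I k, u * Real.tan (u*a) < C := by
      rcases Nat.eq_zero_or_pos k with hk0 | hkpos
      · subst hk0
        have hmax : max (lo 0) 0 = 0 := by
          apply max_eq_right
          simp only [hlo]
          apply le_of_lt
          apply div_neg_of_neg_of_pos _ ha0
          push_cast; nlinarith
        have hc2 : ContinuousAt (fun x : ℝ => x * a) 0 := continuousAt_id.mul continuousAt_const
        have hc3 : ContinuousAt (fun x : ℝ => Real.tan (x * a)) 0 :=
          ContinuousAt.comp (f := fun x : ℝ => x * a) (Real.continuousAt_tan.2 (by simp)) hc2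
        have hcont0 : ContinuousAt (fun μ : ℝ => μ * Real.tan (μ*a)) 0 :=
          continuousAt_id.mul hc3
        have h0 : Tendsto (fun μ : ℝ => μ * Real.tan (μ*a)) (𝓝[>] (0:ℝ)) (𝓝 0) := by
          have := hcont0.tendsto.mono_left (nhdsWithin_le_nhds (s := Ioi (0:ℝ)))
          simpa using this
        have h1 : ∀ᶠ μ in 𝓝[>] (0:ℝ), μ * Real.tan (μ*a) < C :=
          h0.eventually_lt_const hCpos
        have hIk_mem0 : I 0 ∈ 𝓝[>] (0:ℝ) := by
          simp only [hI]
          rw [hmax]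
          exact Ioo_mem_nhdsGT_of_mem ⟨le_refl _, hhi_pos 0⟩
        obtain ⟨u, hu1, hu2⟩ :=
          (h1.and (eventually_of_mem hIk_mem0 (fun x hx => hx))).exists
        exact ⟨u, hu2, hu1⟩
      · have hlok : 0 < lo k := by
          simp only [hlo]
          apply div_pos _ ha0
          have : (1:ℝ) ≤ (k:ℝ) := by exact_mod_cast hkpos
          nlinarith
        have hiu : Tendsto (fun μ => μ*a) (𝓝[>] (lo k)) (𝓝[>] ((2*(k:ℝ)-1)*(π/2))) := by
          apply tendsto_Ioi_map
          · have ht := (continuous_mul_right a).tendsto (lo k)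
            rwa [hloa] at ht
          · intro x hx
            rw [← hloa]
            exact mul_lt_mul_of_pos_right hx ha0
        have htb : Tendsto Real.tan (𝓝[>] ((2*(k:ℝ)-1)*(π/2))) atBot := by
          have := tan_bot (k:ℤ); push_cast at this; exact this
        have hgb : Tendsto (fun μ => μ * Real.tan (μ*a)) (𝓝[>] (lo k)) atBot :=
          Tendsto.pos_mul_atBot hlok (tendsto_id.mono_right nhdsWithin_le_nhds)
            (htb.comp hiu)
        have hIk_mem' : I k ∈ 𝓝[>] (lo k) := by
          simp only [hI]
          rw [max_eq_left hlok.le]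
          exact Ioo_mem_nhdsGT_of_mem ⟨le_refl _, hlo_lt_hi k⟩
        obtain ⟨u, hu1, hu2⟩ :=
          ((hgb.eventually (eventually_lt_atBot C)).and
            (eventually_of_mem hIk_mem' (fun x hx => hx))).exists
        exact ⟨u, hu2, hu1⟩
    obtain ⟨u, huI, huC⟩ := hu
    have huv : u ≤ v := by
      by_contra h
      push_neg at h
      have h5 : v * Real.tan (v*a) < u * Real.tan (u*a) := hmono k hv2 huI h
      linarith
    have hIcc : Icc u v ⊆ I k := by
      simp only [hI, mem_Ioo] at huI hv2 ⊢
      intro x hx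
      simp only [mem_Icc] at hx
      exact ⟨lt_of_lt_of_le huI.1 hx.1, lt_of_le_of_lt hx.2 hv2.2⟩
    have hCmem : C ∈ Icc (u * Real.tan (u*a)) (v * Real.tan (v*a)) :=
      ⟨le_of_lt huC, le_of_lt hv1⟩
    obtain ⟨μ, hμmem, hμeq⟩ := intermediate_value_Icc huv ((hcont k).mono hIcc) hCmem
    exact ⟨μ, hIcc hμmem, hμeq⟩
  choose s hsI hsC using hex
  have hs_lt : ∀ j k : ℕ, j < k → s j < s k := by
    intro j k hjk
    have h1' := hsI j
    have h2' := hsI k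
    simp only [hI, mem_Ioo] at h1' h2'
    have h1 : s j < hi j := h1'.2
    have h2 : max (lo k) 0 < s k := h2'.1
    have h3 : hi j ≤ lo k := by
      simp only [hhi, hlo]
      rw [div_le_div_iff₀ ha0 ha0]
      have hjk' : (j:ℝ) + 1 ≤ (k:ℝ) := by exact_mod_cast hjk
      have hnum : (2*(j:ℝ)+1)*(π/2) ≤ (2*(k:ℝ)-1)*(π/2) := by nlinarith
      exact mul_le_mul_of_nonneg_right hnum ha0.le
    have h4 := le_max_left (lo k) 0
    linarith
  have hseq : {μ : ℝ | 0 < μ ∧ μ < π / 2 ∧ μ * Real.tan (μ * a) = C} = s '' (Iio l) := by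
    ext μ
    simp only [mem_setOf_eq, mem_image, mem_Iio]
    constructor
    · rintro ⟨hμ0, hμπ, hμC⟩
      have hcos : Real.cos (μ*a) ≠ 0 := by
        intro h
        rw [Real.tan_eq_sin_div_cos, h, div_zero, mul_zero] at hμC
        linarith
      set n : ℤ := ⌊μ*a/π + 1/2⌋ with hn
      have hq1 : (n:ℝ) ≤ μ*a/π + 1/2 := Int.floor_le _
      have hq2 : μ*a/π + 1/2 < n + 1 := Int.lt_floor_add_one _
      have hd : μ*a = (μ*a/π)*π := (div_mul_cancel₀ _ (ne_of_gt hπ)).symm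
      have hb2 : μ*a < (2*(n:ℝ)+1)*(π/2) := by
        calc μ*a = (μ*a/π)*π := hd
        _ < ((n:ℝ)+1/2)*π := mul_lt_mul_of_pos_right (by linarith) hπ
        _ = (2*(n:ℝ)+1)*(π/2) := by ring
      have hb1' : (2*(n:ℝ)-1)*(π/2) ≤ μ*a := by
        calc (2*(n:ℝ)-1)*(π/2) = ((n:ℝ)-1/2)*π := by ring
        _ ≤ (μ*a/π)*π := mul_le_mul_of_nonneg_right (by linarith) (le_of_lt hπ)
        _ = μ*a := hd.symm
      have hb1 : (2*(n:ℝ)-1)*(π/2) < μ*a := by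
        rcases lt_or_eq_of_le hb1' with h | h
        · exact h
        · exfalso
          apply hcos
          rw [Real.cos_eq_zero_iff]
          exact ⟨n-1, by push_cast; rw [← h]; ring⟩
      have hμa0 : 0 < μ*a := mul_pos hμ0 ha0
      have hn0 : 0 ≤ n := by
        by_contra h
        push_neg at h
        have h'' : n ≤ -1 := by omega
        have h' : (n:ℝ) ≤ -1 := by exact_mod_cast h''
        nlinarith [hb2, hμa0, hπ]
      have hnl : n ≤ (l:ℤ) := by
        have h1 : μ*a < (2*(l:ℝ)+1)*(π/2) := by
          have h2 := mul_lt_mul_of_pos_right hμπ ha0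
          nlinarith
        have h2 : (2*(n:ℝ)-1) < 2*(l:ℝ)+1 := by nlinarith
        have h3 : (2*n-1 : ℤ) < 2*(l:ℤ)+1 := by exact_mod_cast h2
        omega
      have hkn : ((n.toNat:ℕ):ℝ) = (n:ℝ) := by
        have := Int.toNat_of_nonneg hn0
        exact_mod_cast this
      have hμIk : μ ∈ I n.toNat := by
        simp only [hI, mem_Ioo]
        constructor
        · apply max_lt _ hμ0
          simp only [hlo]
          rw [div_lt_iff₀ ha0, hkn]
          exact hb1
        · simp only [hhi]
          rw [lt_div_iff₀ ha0, hkn]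
          exact hb2
      have hkl : n.toNat ≤ l := by omega
      rcases lt_or_eq_of_le hkl with hlt | heq
      · refine ⟨n.toNat, hlt, ?_⟩
        exact (hmono n.toNat).injOn (hsI n.toNat) hμIk ((hsC n.toNat).trans hμC.symm)
      · exfalso
        have hπI : π/2 ∈ I l := by
          simp only [hI, mem_Ioo]
          refine ⟨max_lt ?_ (by positivity), ?_⟩
          · simp only [hlo]
            rw [div_lt_iff₀ ha0]
            nlinarith
          · simp only [hhi]
            rw [lt_div_iff₀ ha0]
            nlinarith
        have hgπ : (π/2) * Real.tan ((π/2)*a) = C := hfst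
        have heqμ : μ = π/2 := by
          apply (hmono l).injOn (heq ▸ hμIk) hπI
          show μ * Real.tan (μ*a) = (π/2) * Real.tan ((π/2)*a)
          rw [hμC, hgπ]
        exact absurd heqμ (ne_of_lt hμπ)
    · rintro ⟨k, hkl, rfl⟩
      have hskI := hsI k
      simp only [hI, mem_Ioo] at hskI
      refine ⟨lt_of_le_of_lt (le_max_right _ _) hskI.1, ?_, hsC k⟩
      have h1 : hi k < π/2 := by
        simp only [hhi]
        rw [div_lt_iff₀ ha0]
        have h2 : (k:ℝ) + 1 ≤ (l:ℝ) := by exact_mod_cast hkl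
        nlinarith
      simp only [hhi] at h1
      linarith [hskI.2]
  rw [hseq, show (Iio l : Set ℕ) = ↑(Finset.range l) by ext x; simp]
  have hinj : InjOn s ↑(Finset.range l) := by
    intro x _ y _ hxy
    by_contra hne
    rcases lt_or_gt_of_ne hne with h | h
    · exact absurd hxy (ne_of_lt (hs_lt x y h))
    · exact absurd hxy.symm (ne_of_lt (hs_lt y x h))
  rw [Set.ncard_image_of_injOn hinj, Set.ncard_coe_finset, Finset.card_range]
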